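/- Let E be a real inner product space, let P, Q₁, Q₂ ∈ E with Q₁ ≠ P and Q₂ ≠ P, and let α be a real number with 0 < α ≤ π such that the angle ∠Q₁PQ₂ > α. Let C₁, C₂, ℓ₁, ℓ₂ be nonnegative real numbers with ℓ₁ ≤ C₁·dist(P,Q₁) and ℓ₂ ≤ C₂·dist(P,Q₂). Then ℓ₁ + ℓ₂ ≤ ((C₁ + C₂)/sin(α/2))·dist(Q₁,Q₂). -/

import Mathlib

open InnerProductGeometry

set_option maxHeartbeats 800000 in
/-- Concatenation lemma for Lavrentiev arcs: if two arcs of lengths `ℓ₁ ≤ C₁·dist(P,Q₁)` and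
`ℓ₂ ≤ C₂·dist(P,Q₂)` meet at `P` with angle `∠Q₁PQ₂ > α`, then
`ℓ₁ + ℓ₂ ≤ ((C₁+C₂)/sin(α/2))·dist(Q₁,Q₂)`. -/
theorem lavrentiev_concatenation
    {E : Type*} [NormedAddCommGroup E] [InnerProductSpace ℝ E]
    (P Q₁ Q₂ : E) (hQ₁ : Q₁ ≠ P) (hQ₂ : Q₂ ≠ P)
    (α : ℝ) (hα0 : 0 < α) (hαpi : α ≤ Real.pi)
    (hangle : α < InnerProductGeometry.angle (Q₁ - P) (Q₂ - P))
    (C₁ C₂ ℓ₁ ℓ₂ : ℝ) (hC₁ : 0 ≤ C₁) (hC₂ : 0 ≤ C₂) (hℓ₁ : 0 ≤ ℓ₁) (hℓ₂ : 0 ≤ ℓ₂)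
    (h1 : ℓ₁ ≤ C₁ * dist P Q₁) (h2 : ℓ₂ ≤ C₂ * dist P Q₂) :
    ℓ₁ + ℓ₂ ≤ ((C₁ + C₂) / Real.sin (α / 2)) * dist Q₁ Q₂ := by
  set θ := InnerProductGeometry.angle (Q₁ - P) (Q₂ - P) with hθ
  have hθpi : θ ≤ Real.pi := InnerProductGeometry.angle_le_pi _ _
  set a := ‖Q₁ - P‖ with ha
  set b := ‖Q₂ - P‖ with hb
  have ha0 : 0 < a := by simpa [ha] using sub_ne_zero.mpr hQ₁
  have hb0 : 0 < b := by simpa [hb] using sub_ne_zero.mpr hQ₂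
  set t := Real.sin (α / 2) with ht
  set s := Real.sin (θ / 2) with hs
  have ht0 : 0 < t := Real.sin_pos_of_pos_of_lt_pi (by linarith) (by linarith [Real.pi_pos])
  -- monotonicity of sin on [0, π/2]
  have hts : t ≤ s := by
    apply Real.sin_le_sin_of_le_of_le_pi_div_two (by linarith [Real.pi_pos]) (by linarith)
      (by linarith)
  have hs1 : s ≤ 1 := Real.sin_le_one _
  have ht1 : t ≤ 1 := le_trans hts hs1
  -- law of cosines
  have hcos : Real.cos θ * (a * b) = (inner ℝ (Q₁ - P) (Q₂ - P) : ℝ) :=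
    InnerProductGeometry.cos_angle_mul_norm_mul_norm _ _
  have hlaw : dist Q₁ Q₂ ^ 2 = a ^ 2 + b ^ 2 - 2 * (Real.cos θ * (a * b)) := by
    rw [dist_eq_norm, hcos]
    have : Q₁ - Q₂ = (Q₁ - P) - (Q₂ - P) := by abel
    rw [this, norm_sub_sq_real]; ring
  have hcosθ : Real.cos θ = 1 - 2 * s ^ 2 := by
    have h2m := Real.cos_two_mul (θ / 2)
    rw [show 2 * (θ / 2) = θ by ring] at h2m
    have hpyth := Real.sin_sq_add_cos_sq (θ / 2)
    nlinarith
  have hkey : t * (a + b) ≤ dist Q₁ Q₂ := by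
    have hd0 : 0 ≤ dist Q₁ Q₂ := dist_nonneg
    have hsq : (t * (a + b)) ^ 2 ≤ dist Q₁ Q₂ ^ 2 := by
      rw [hlaw, hcosθ]
      have e1 : 0 ≤ (1 - t ^ 2) * (a - b) ^ 2 :=
        mul_nonneg (by nlinarith) (sq_nonneg _)
      have e2 : 0 ≤ (a * b) * ((s - t) * (s + t)) :=
        mul_nonneg (mul_pos ha0 hb0).le
          (mul_nonneg (by linarith) (by linarith))
      nlinarith [e1, e2]
    exact (pow_le_pow_iff_left₀ (by positivity) hd0 two_ne_zero).mp hsq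
  have hda : dist P Q₁ = a := by rw [ha, dist_eq_norm, norm_sub_rev]
  have hdb : dist P Q₂ = b := by rw [hb, dist_eq_norm, norm_sub_rev]
  have hab : ℓ₁ + ℓ₂ ≤ (C₁ + C₂) * (a + b) := by
    rw [hda] at h1; rw [hdb] at h2
    nlinarith [mul_nonneg hC₁ hb0.le, mul_nonneg hC₂ ha0.le]
  have : (C₁ + C₂) * (a + b) ≤ ((C₁ + C₂) / t) * dist Q₁ Q₂ := by
    rw [div_mul_eq_mul_div, le_div_iff₀ ht0]
    have h' := mul_le_mul_of_nonneg_left hkey (add_nonneg hC₁ hC₂)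
    calc (C₁ + C₂) * (a + b) * t = (C₁ + C₂) * (t * (a + b)) := by ring
      _ ≤ (C₁ + C₂) * dist Q₁ Q₂ := h'
  linarith
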